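/- The pure braid group of two points on the 2-sphere is trivial; that is, the fundamental group of the ordered configuration space F_2(S^2) of two distinct points in S^2 is the trivial group. -/

import Mathlib

open Metric

/-- The 2-sphere as the unit sphere in `ℝ³`. -/
noncomputable abbrev Sphere2 : Type := Metric.sphere (0 : EuclideanSpace ℝ (Fin 3)) 1

abbrev E3 := EuclideanSpace ℝ (Fin 3)

lemma rank_E3 : Module.rank ℝ E3 = 3 := by
  have := finrank_euclideanSpace_fin (𝕜 := ℝ) (n := 3)
  exact_mod_cast (Module.finrank_eq_rank ℝ E3).symm.trans (by exact_mod_cast congrArg Nat.cast this)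

instance : PathConnectedSpace Sphere2 := by
  have h : IsPathConnected (sphere (0:E3) 1) := by
    apply isPathConnected_sphere _ 0 zero_le_one
    rw [rank_E3]; norm_num
  exact isPathConnected_iff_pathConnectedSpace.mp h

lemma contractible_compl (p : Sphere2) : ContractibleSpace {y : Sphere2 // y ≠ p} := by
  have hp : ‖(p : E3)‖ = 1 := by
    have := p.2; rwa [mem_sphere_zero_iff_norm] at this
  let e := stereographic (v := (p : E3)) hp
  have hsrc : e.source = {p}ᶜ := by
    simp only [e, stereographic]
  have h1 : {y : Sphere2 // y ≠ p} ≃ₜ e.source := by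
    rw [hsrc]
    exact { toEquiv := Equiv.subtypeEquivRight (fun y => by simp),
            continuous_toFun := Continuous.subtype_mk continuous_subtype_val _,
            continuous_invFun := Continuous.subtype_mk continuous_subtype_val _ }
  have h2 : e.source ≃ₜ e.target := e.toHomeomorphSourceTarget
  have h3 : e.target ≃ₜ ((ℝ ∙ (p:E3))ᗮ : Submodule ℝ E3) := by
    rw [show e.target = Set.univ from rfl]
    exact Homeomorph.Set.univ _
  have : ContractibleSpace ((ℝ ∙ (p:E3))ᗮ : Submodule ℝ E3) := by infer_instance
  exact ((h1.trans h2).trans h3).contractibleSpace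

open unitInterval in
lemma norm_coe_sphere2 (y : Sphere2) : ‖(y : E3)‖ = 1 := by
  have := y.2; rwa [mem_sphere_zero_iff_norm] at this

lemma combo_ne_zero {a b : E3} (ha : ‖a‖ = 1) (hb : ‖b‖ = 1) (hab : a ≠ -b)
    {s : ℝ} (h0 : 0 ≤ s) (h1 : s ≤ 1) : (1 - s) • a + s • b ≠ 0 := by
  intro h
  have h2 : (1 - s) • a = -(s • b) := eq_neg_of_add_eq_zero_left h
  have h3 : |1 - s| = |s| := by
    have := congrArg norm h2
    rwa [norm_neg, norm_smul, norm_smul, ha, hb, mul_one, mul_one,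
      Real.norm_eq_abs, Real.norm_eq_abs] at this
  have hs : s = 1/2 := by
    rw [abs_of_nonneg (by linarith), abs_of_nonneg h0] at h3; linarith
  subst hs
  apply hab
  have h4 : (1/2 : ℝ) • a = (1/2 : ℝ) • (-b) := by
    rw [smul_neg]; convert h2 using 2; norm_num
  exact smul_right_injective E3 (by norm_num) h4

lemma mem_sphere2_normalize {v : E3} (hv : v ≠ 0) : ‖v‖⁻¹ • v ∈ sphere (0:E3) 1 := by
  rw [mem_sphere_zero_iff_norm, norm_smul, norm_inv, norm_norm,
    inv_mul_cancel₀ (norm_ne_zero_iff.2 hv)]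

open unitInterval in
lemma homotopic_of_not_antipodal {x y : Sphere2} (p q : Path x y)
    (h : ∀ t : I, (p t : E3) ≠ -(q t : E3)) : p.Homotopic q := by
  classical
  set c : I × I → E3 := fun st =>
    (1 - (st.1 : ℝ)) • ((p st.2 : E3)) + (st.1 : ℝ) • (q st.2 : E3) with hc
  have key : ∀ st : I × I, c st ≠ 0 := fun st =>
    combo_ne_zero (norm_coe_sphere2 _) (norm_coe_sphere2 _) (h st.2) st.1.2.1 st.1.2.2
  have hcont : Continuous c := by
    apply Continuous.add
    · exact (continuous_const.sub (continuous_subtype_val.comp continuous_fst)).smul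
        (continuous_subtype_val.comp ((p.continuous).comp continuous_snd))
    · exact (continuous_subtype_val.comp continuous_fst).smul
        (continuous_subtype_val.comp ((q.continuous).comp continuous_snd))
  have hnorm : ∀ (z : E3) (hz : z ≠ 0), ∀ w : Sphere2, z = (w : E3) → (⟨‖z‖⁻¹ • z, mem_sphere2_normalize hz⟩ : Sphere2) = w := by
    rintro z hz w rfl
    apply Subtype.ext
    show ‖(w : E3)‖⁻¹ • (w : E3) = (w : E3)
    rw [norm_coe_sphere2, inv_one, one_smul]
  refine ⟨{ toFun := fun st => ⟨‖c st‖⁻¹ • c st, mem_sphere2_normalize (key st)⟩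
            continuous_toFun := ((hcont.norm.inv₀ fun st => norm_ne_zero_iff.2 (key st)).smul hcont).subtype_mk _
            map_zero_left := ?_
            map_one_left := ?_
            prop' := ?_ }⟩
  · intro t
    apply hnorm _ (key _) (p t)
    simp [hc]
  · intro t
    apply hnorm _ (key _) (q t)
    simp [hc]
  · rintro s t (rfl | h1)
    · apply hnorm _ (key _) (p 0)
      show (1 - (s : ℝ)) • ((p 0 : E3)) + (s : ℝ) • (q 0 : E3) = _
      rw [p.source, q.source, sub_smul, one_smul, sub_add_cancel]
    · simp only [Set.mem_singleton_iff] at h1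
      subst h1
      apply hnorm _ (key _) (p 1)
      show (1 - (s : ℝ)) • ((p 1 : E3)) + (s : ℝ) • (q 1 : E3) = _
      rw [p.target, q.target, sub_smul, one_smul, sub_add_cancel]

open unitInterval in
lemma nullhomotopic_of_avoids {x : Sphere2} (γ : Path x x) (p : Sphere2)
    (h : ∀ t : I, γ t ≠ p) : γ.Homotopic (Path.refl x) := by
  have hcontr := contractible_compl p
  have hsc : SimplyConnectedSpace {y : Sphere2 // y ≠ p} :=
    SimplyConnectedSpace.ofContractible _
  have hx : x ≠ p := γ.source ▸ h 0
  let γ' : Path (⟨x, hx⟩ : {y : Sphere2 // y ≠ p}) ⟨x, hx⟩ :=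
    { toFun := fun t => ⟨γ t, h t⟩
      continuous_toFun := γ.continuous.subtype_mk _
      source' := Subtype.ext γ.source
      target' := Subtype.ext γ.target }
  have h1 : γ'.Homotopic (Path.refl _) := SimplyConnectedSpace.paths_homotopic _ _
  let f : C({y : Sphere2 // y ≠ p}, Sphere2) := ⟨Subtype.val, continuous_subtype_val⟩
  have h2 := h1.map f
  have e1 : γ'.map f.continuous = γ := by ext t; rfl
  have e2 : (Path.refl (⟨x, hx⟩ : {y : Sphere2 // y ≠ p})).map f.continuous = Path.refl x := by
    ext t; rfl
  rwa [e1, e2] at h2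

-- clamp
noncomputable def cl (s : ℝ) : ℝ := max 0 (min 1 s)
lemma cl_continuous : Continuous cl := continuous_const.max (continuous_const.min continuous_id)
lemma cl_of_le {s : ℝ} (h : s ≤ 0) : cl s = 0 := by
  have : min 1 s = s := min_eq_right (by linarith)
  simp [cl, this, max_eq_left h]
lemma cl_of_ge {s : ℝ} (h : 1 ≤ s) : cl s = 1 := by simp [cl, min_eq_left h]
lemma cl_of_mem {s : ℝ} (h0 : 0 ≤ s) (h1 : s ≤ 1) : cl s = s := by
  simp [cl, min_eq_right h1, max_eq_right h0]

section PL
variable (N : ℕ) (y : ℕ → E3)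

noncomputable def Ppl (t : ℝ) : E3 :=
  y 0 + ∑ i ∈ Finset.range N, cl ((N : ℝ) * t - i) • (y (i+1) - y i)

lemma Ppl_continuous : Continuous (Ppl N y) := by
  apply continuous_const.add
  apply continuous_finset_sum
  intro i _
  exact (cl_continuous.comp ((continuous_const.mul continuous_id).sub continuous_const)).smul
    continuous_const

lemma Ppl_zero : Ppl N y 0 = y 0 := by
  rw [Ppl]
  rw [Finset.sum_eq_zero, add_zero]
  intro i _
  rw [mul_zero, zero_sub, cl_of_le (neg_nonpos.mpr (Nat.cast_nonneg i)), zero_smul]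

lemma Ppl_one (hN : 0 < N) : Ppl N y 1 = y N := by
  rw [Ppl]
  have : ∀ i ∈ Finset.range N, cl ((N : ℝ) * 1 - i) • (y (i+1) - y i) = y (i+1) - y i := by
    intro i hi
    rw [cl_of_ge, one_smul]
    have : (i : ℝ) + 1 ≤ N := by exact_mod_cast Finset.mem_range.mp hi
    linarith
  rw [Finset.sum_congr rfl this, Finset.sum_range_sub (fun i => y i)]
  abel

lemma Ppl_rep (hN : 0 < N) {t : ℝ} (ht0 : 0 ≤ t) (ht1 : t ≤ 1) :
    ∃ j : ℕ, j < N ∧ (j : ℝ) ≤ N * t ∧ (N : ℝ) * t ≤ j + 1 ∧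
      Ppl N y t = y j + ((N : ℝ) * t - j) • (y (j+1) - y j) := by
  set j : ℕ := min ⌊(N : ℝ) * t⌋₊ (N - 1) with hj
  have hNt0 : 0 ≤ (N : ℝ) * t := by positivity
  have hjN : j < N := lt_of_le_of_lt (min_le_right _ _) (Nat.sub_lt hN one_pos)
  have hj1 : (j : ℝ) ≤ N * t := by
    calc (j : ℝ) ≤ (⌊(N : ℝ) * t⌋₊ : ℝ) := by exact_mod_cast min_le_left _ _
    _ ≤ N * t := Nat.floor_le hNt0
  have hj2 : (N : ℝ) * t ≤ j + 1 := by
    by_cases hc : ⌊(N : ℝ) * t⌋₊ ≤ N - 1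
    · rw [hj, min_eq_left hc]
      exact (Nat.lt_floor_add_one _).le
    · rw [hj, min_eq_right (le_of_not_ge hc)]
      have h1 : ((N - 1 : ℕ) : ℝ) = (N : ℝ) - 1 := by
        rw [Nat.cast_sub hN]; norm_num
      rw [h1]
      nlinarith [(by exact_mod_cast hN : (0:ℝ) < N)]
  refine ⟨j, hjN, hj1, hj2, ?_⟩
  rw [Ppl, ← Finset.sum_range_add_sum_Ico _ (Nat.succ_le_of_lt hjN)]
  have hIco : ∑ i ∈ Finset.Ico (j+1) N, cl ((N : ℝ) * t - i) • (y (i+1) - y i) = 0 := by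
    apply Finset.sum_eq_zero
    intro i hi
    have : (j : ℝ) + 1 ≤ i := by exact_mod_cast (Finset.mem_Ico.mp hi).1
    rw [cl_of_le (by linarith), zero_smul]
  have hrj : ∑ i ∈ Finset.range j, cl ((N : ℝ) * t - i) • (y (i+1) - y i)
      = ∑ i ∈ Finset.range j, (y (i+1) - y i) := by
    apply Finset.sum_congr rfl
    intro i hi
    have : (i : ℝ) + 1 ≤ j := by exact_mod_cast Finset.mem_range.mp hi
    rw [cl_of_ge (by linarith), one_smul]
  rw [hIco, add_zero, Finset.sum_range_succ, hrj, Finset.sum_range_sub (fun i => y i),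
    cl_of_mem (by linarith) (by linarith)]
  abel

end PL

open unitInterval in
lemma loop_nullhomotopic {x : Sphere2} (γ : Path x x) : γ.Homotopic (Path.refl x) := by
  classical
  -- uniform continuity
  have hu : UniformContinuous (fun t : I => γ t) :=
    CompactSpace.uniformContinuous_of_continuous γ.continuous
  obtain ⟨δ, hδ0, hδ⟩ := Metric.uniformContinuous_iff.mp hu (1/2) (by norm_num)
  obtain ⟨n0, hn0⟩ := exists_nat_one_div_lt hδ0
  set N := n0 + 1 with hNdef
  have hN : 0 < N := Nat.succ_pos _
  have hNR : (0:ℝ) < N := by exact_mod_cast hN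
  have hNδ : 1 / (N:ℝ) < δ := by exact_mod_cast hn0
  -- nodes
  set τ : ℕ → I := fun i => Set.projIcc 0 1 zero_le_one ((i:ℝ)/N) with hτ
  set q : ℕ → E3 := fun i => (γ (τ i) : E3) with hq
  have hq_sphere : ∀ i, ‖q i‖ = 1 := fun i => norm_coe_sphere2 _
  have hτval : ∀ i : ℕ, i ≤ N → ((τ i : ℝ)) = (i:ℝ)/N := by
    intro i hi
    show ((Set.projIcc 0 1 zero_le_one ((i:ℝ)/N) : I) : ℝ) = (i:ℝ)/N
    rw [Set.projIcc_of_mem zero_le_one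
      ⟨by positivity, by rw [div_le_one hNR]; exact_mod_cast hi⟩]
  -- closeness of nodes to nearby values of γ
  have hclose : ∀ (i : ℕ) (s : I), |(s:ℝ) - (i:ℝ)/N| ≤ 1/N → ‖q i - (γ s : E3)‖ < 1/2 := by
    intro i s hs
    have h2 : dist (τ i) s ≤ 1/N := by
      have h3 : s = Set.projIcc 0 1 zero_le_one (s:ℝ) := (Set.projIcc_val zero_le_one s).symm
      calc dist (τ i) s = dist (Set.projIcc 0 1 zero_le_one ((i:ℝ)/N))
            (Set.projIcc 0 1 zero_le_one (s:ℝ)) := by rw [← h3, hτ]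
        _ ≤ 1 * dist ((i:ℝ)/N) ((s:ℝ)) := (LipschitzWith.projIcc zero_le_one).dist_le_mul _ _
        _ ≤ 1/N := by
            rw [one_mul, Real.dist_eq, abs_sub_comm]; exact hs
    have h4 : dist (γ (τ i)) (γ s) < 1/2 := hδ (lt_of_le_of_lt h2 hNδ)
    rw [← dist_eq_norm]
    exact h4
  -- consecutive nodes are close
  have hd : ∀ i, i < N → ‖q (i+1) - q i‖ < 1/2 := by
    intro i hi
    have h5 : |((τ i : ℝ)) - ((i+1:ℕ):ℝ)/N| ≤ 1/N := by
      rw [hτval i (le_of_lt hi), show (((i+1:ℕ)):ℝ) = (i:ℝ)+1 by push_cast; ring,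
        show (i:ℝ)/N - ((i:ℝ)+1)/N = -(1/N) by ring, abs_neg,
        abs_of_nonneg (by positivity)]
    exact hclose (i+1) (τ i) h5
  -- the subspaces spanned by consecutive nodes
  set W : ℕ → Submodule ℝ E3 := fun j => Submodule.span ℝ {q j, q (j+1)} with hW
  have hWne : ∀ j, W j ≠ ⊤ := by
    intro j htop
    have h1 : Module.rank ℝ (W j) ≤ 2 := by
      refine le_trans (rank_span_le _) ?_
      refine le_trans Cardinal.mk_insert_le ?_
      rw [Cardinal.mk_singleton]
      norm_num
    rw [htop, rank_top, rank_E3] at h1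
    norm_num at h1
  have hcover : (⋃ i : Fin N, ((W i : Submodule ℝ E3) : Set E3)) ≠ Set.univ := by
    intro h
    obtain ⟨i, hi⟩ := Subspace.exists_eq_top_of_iUnion_eq_univ h
    exact hWne i hi
  obtain ⟨v, hv⟩ := (Set.ne_univ_iff_exists_notMem _).mp hcover
  have hv0 : v ≠ 0 := by
    intro h
    exact hv (Set.mem_iUnion.mpr ⟨⟨0, hN⟩, by simp [h]⟩)
  set p : Sphere2 := ⟨‖v‖⁻¹ • v, mem_sphere2_normalize hv0⟩ with hp
  have hpW : ∀ i : Fin N, (p : E3) ∉ (W i : Submodule ℝ E3) := by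
    intro i hmem
    apply hv
    apply Set.mem_iUnion.mpr ⟨i, ?_⟩
    have h6 : v = ‖v‖ • ((p : E3)) := by
      rw [hp]
      show v = ‖v‖ • (‖v‖⁻¹ • v)
      rw [smul_inv_smul₀ (norm_ne_zero_iff.2 hv0)]
    rw [h6]
    exact Submodule.smul_mem _ _ hmem
  -- main pointwise estimates
  have hmain : ∀ t : I, Ppl N q (t:ℝ) ≠ 0 ∧ (∃ i : Fin N, Ppl N q (t:ℝ) ∈ W i) ∧
      ‖Ppl N q (t:ℝ) - (γ t : E3)‖ < 1 ∧ |1 - ‖Ppl N q (t:ℝ)‖| ≤ 1/2 := by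
    intro t
    obtain ⟨j, hjN, hj1, hj2, hrep⟩ := Ppl_rep N q hN t.2.1 t.2.2
    set u := (N:ℝ)*(t:ℝ) - j with hu
    have hu0 : 0 ≤ u := by simp only [hu]; linarith
    have hu1 : u ≤ 1 := by simp only [hu]; linarith
    have hdj : ‖q (j+1) - q j‖ < 1/2 := hd j hjN
    have h1 : ‖Ppl N q (t:ℝ) - q j‖ < 1/2 := by
      rw [hrep]
      rw [add_sub_cancel_left, norm_smul, Real.norm_eq_abs, abs_of_nonneg hu0]
      calc u * ‖q (j+1) - q j‖ ≤ 1 * ‖q (j+1) - q j‖ :=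
            mul_le_mul_of_nonneg_right hu1 (norm_nonneg _)
        _ < 1/2 := by rw [one_mul]; exact hdj
    have habs : |‖Ppl N q (t:ℝ)‖ - 1| < 1/2 := by
      calc |‖Ppl N q (t:ℝ)‖ - 1| = |‖Ppl N q (t:ℝ)‖ - ‖q j‖| := by rw [hq_sphere j]
        _ ≤ ‖Ppl N q (t:ℝ) - q j‖ := abs_norm_sub_norm_le _ _
        _ < 1/2 := h1
    rw [abs_lt] at habs
    refine ⟨?_, ⟨⟨j, hjN⟩, ?_⟩, ?_, ?_⟩
    · intro h0
      rw [h0, norm_zero] at habs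
      linarith [habs.1]
    · rw [hrep]
      refine Submodule.add_mem _ ?_ (Submodule.smul_mem _ _ (Submodule.sub_mem _ ?_ ?_))
      · exact Submodule.subset_span (Set.mem_insert _ _)
      · exact Submodule.subset_span (Set.mem_insert_iff.mpr (Or.inr rfl))
      · exact Submodule.subset_span (Set.mem_insert _ _)
    · have h7 : |(t:ℝ) - (j:ℝ)/N| ≤ 1/N := by
        have e1 : (j:ℝ)/N ≤ (t:ℝ) := by
          rw [div_le_iff₀ hNR]
          linarith [mul_comm (N:ℝ) (t:ℝ)]
        have e2 : (t:ℝ) ≤ ((j:ℝ)+1)/N := by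
          rw [le_div_iff₀ hNR]
          linarith [mul_comm (N:ℝ) (t:ℝ)]
        have h8 : ((j:ℝ)+1)/N = (j:ℝ)/N + 1/N := by ring
        have h9 : (0:ℝ) ≤ 1/N := by positivity
        rw [abs_le]
        constructor <;> linarith
      have h9 : ‖q j - (γ t : E3)‖ < 1/2 := hclose j t h7
      calc ‖Ppl N q (t:ℝ) - (γ t : E3)‖
          ≤ ‖Ppl N q (t:ℝ) - q j‖ + ‖q j - (γ t : E3)‖ := norm_sub_le_norm_sub_add_norm_sub _ _ _
        _ < 1/2 + 1/2 := add_lt_add h1 h9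
        _ = 1 := by norm_num
    · rw [abs_le]
      constructor <;> linarith [habs.1, habs.2]
  -- the piecewise-geodesic loop
  have hval : ∀ t : I, ‖Ppl N q (t:ℝ)‖⁻¹ • Ppl N q (t:ℝ) ∈ Metric.sphere (0:E3) 1 :=
    fun t => mem_sphere2_normalize (hmain t).1
  have hq0 : q 0 = (x : E3) := by
    have hτ0 : τ 0 = 0 := by
      apply Subtype.ext
      rw [hτval 0 (Nat.zero_le _)]
      simp
    show ((γ (τ 0) : E3)) = (x : E3)
    rw [hτ0, γ.source]
  have hqN : q N = (x : E3) := by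
    have hτN : τ N = 1 := by
      apply Subtype.ext
      rw [hτval N le_rfl, div_self (ne_of_gt hNR)]
      rfl
    show ((γ (τ N) : E3)) = (x : E3)
    rw [hτN, γ.target]
  set γ'' : Path x x :=
    { toFun := fun t => (⟨‖Ppl N q (t:ℝ)‖⁻¹ • Ppl N q (t:ℝ), hval t⟩ : Sphere2)
      continuous_toFun := by
        have hc : Continuous (fun t : I => Ppl N q (t:ℝ)) :=
          (Ppl_continuous N q).comp continuous_subtype_val
        exact ((hc.norm.inv₀ fun t => norm_ne_zero_iff.2 (hmain t).1).smul hc).subtype_mk _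
      source' := by
        apply Subtype.ext
        show ‖Ppl N q ((0:I):ℝ)‖⁻¹ • Ppl N q ((0:I):ℝ) = (x : E3)
        rw [show ((0:I):ℝ) = 0 from rfl, Ppl_zero, hq0, norm_coe_sphere2 x, inv_one, one_smul]
      target' := by
        apply Subtype.ext
        show ‖Ppl N q ((1:I):ℝ)‖⁻¹ • Ppl N q ((1:I):ℝ) = (x : E3)
        rw [show ((1:I):ℝ) = 1 from rfl, Ppl_one N q hN, hqN, norm_coe_sphere2 x, inv_one,
          one_smul] } with hγ''
  -- distance from γ'' to γ is < 2
  have hclose2 : ∀ t : I, ‖(γ'' t : E3) - (γ t : E3)‖ < 2 := by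
    intro t
    have h1 := (hmain t).2.2.1
    have h2 := (hmain t).2.2.2
    have hne := (hmain t).1
    have hval'' : (γ'' t : E3) = ‖Ppl N q (t:ℝ)‖⁻¹ • Ppl N q (t:ℝ) := rfl
    have hP0 : ‖Ppl N q (t:ℝ)‖ ≠ 0 := norm_ne_zero_iff.2 hne
    have h3 : ‖(γ'' t : E3) - Ppl N q (t:ℝ)‖ = |1 - ‖Ppl N q (t:ℝ)‖| := by
      rw [hval'']
      rw [show ‖Ppl N q (t:ℝ)‖⁻¹ • Ppl N q (t:ℝ) - Ppl N q (t:ℝ)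
          = (‖Ppl N q (t:ℝ)‖⁻¹ - 1) • Ppl N q (t:ℝ) by rw [sub_smul, one_smul]]
      rw [norm_smul, Real.norm_eq_abs]
      calc |‖Ppl N q (t:ℝ)‖⁻¹ - 1| * ‖Ppl N q (t:ℝ)‖
          = |‖Ppl N q (t:ℝ)‖⁻¹ - 1| * |‖Ppl N q (t:ℝ)‖| := by
            rw [abs_of_nonneg (norm_nonneg _)]
        _ = |(‖Ppl N q (t:ℝ)‖⁻¹ - 1) * ‖Ppl N q (t:ℝ)‖| := (abs_mul _ _).symm
        _ = |1 - ‖Ppl N q (t:ℝ)‖| := by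
            rw [sub_mul, inv_mul_cancel₀ hP0, one_mul]
    calc ‖(γ'' t : E3) - (γ t : E3)‖
        ≤ ‖(γ'' t : E3) - Ppl N q (t:ℝ)‖ + ‖Ppl N q (t:ℝ) - (γ t : E3)‖ :=
          norm_sub_le_norm_sub_add_norm_sub _ _ _
      _ < 1/2 + 1 := by rw [h3]; exact add_lt_add_of_le_of_lt h2 h1
      _ < 2 := by norm_num
  have hγγ'' : γ.Homotopic γ'' := by
    apply homotopic_of_not_antipodal
    intro t heq
    have h1 := hclose2 t
    rw [heq] at h1
    have h2 : ‖(γ'' t : E3) - -(γ'' t : E3)‖ = 2 := by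
      rw [sub_neg_eq_add, ← two_smul ℝ, norm_smul, norm_coe_sphere2]
      norm_num
    rw [h2] at h1
    exact lt_irrefl _ h1
  have hγ''p : ∀ t : I, γ'' t ≠ p := by
    intro t heq
    obtain ⟨i, hi⟩ := (hmain t).2.1
    apply hpW i
    rw [← heq]
    show (‖Ppl N q (t:ℝ)‖⁻¹ • Ppl N q (t:ℝ) : E3) ∈ (W i : Submodule ℝ E3)
    exact Submodule.smul_mem _ _ hi
  exact (hγγ''.trans (nullhomotopic_of_avoids γ'' p hγ''p))


lemma sphere2_paths_homotopic {a b : Sphere2} (p q : Path a b) : p.Homotopic q := by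
  have h2 : (q.trans q.symm).Homotopic (Path.refl a) := ⟨(Path.Homotopy.reflTransSymm q).symm⟩
  have hL : (q.symm.trans p).Homotopic (Path.refl b) := loop_nullhomotopic _
  have s1 : p.Homotopic ((Path.refl a).trans p) := Path.Homotopic.symm ⟨Path.Homotopy.reflTrans p⟩
  have s2 : ((Path.refl a).trans p).Homotopic ((q.trans q.symm).trans p) :=
    Path.Homotopic.hcomp (Path.Homotopic.symm h2) (Path.Homotopic.refl p)
  have s3 : ((q.trans q.symm).trans p).Homotopic (q.trans (q.symm.trans p)) :=
    ⟨Path.Homotopy.transAssoc q q.symm p⟩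
  have s4 : (q.trans (q.symm.trans p)).Homotopic (q.trans (Path.refl b)) :=
    Path.Homotopic.hcomp (Path.Homotopic.refl q) hL
  have s5 : (q.trans (Path.refl b)).Homotopic q := ⟨Path.Homotopy.transRefl q⟩
  exact ((((s1.trans s2).trans s3).trans s4).trans s5)

attribute [local instance] Path.Homotopic.setoid

instance sphere2_simplyConnected : SimplyConnectedSpace Sphere2 := by
  rw [simply_connected_iff_paths_homotopic]
  refine ⟨inferInstance, ?_⟩
  intro a b
  constructor
  intro f g
  induction f using Quotient.inductionOn
  induction g using Quotient.inductionOn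
  exact Quotient.sound (sphere2_paths_homotopic _ _)

/-- The ordered configuration space of two distinct points on the 2-sphere. -/
abbrev OrderedConfig2Sphere : Type := {p : Sphere2 × Sphere2 // p.1 ≠ p.2}


noncomputable def negS (y : Sphere2) : Sphere2 :=
  ⟨-(y : E3), by rw [mem_sphere_zero_iff_norm, norm_neg, norm_coe_sphere2]⟩

lemma negS_continuous : Continuous negS :=
  (continuous_subtype_val.neg).subtype_mk _

lemma ne_negS (y : Sphere2) : y ≠ negS y := by
  intro h
  have h1 : (y : E3) = -(y : E3) := congrArg Subtype.val h
  have h2 : (2 : ℝ) • (y : E3) = 0 := by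
    rw [two_smul]
    nth_rewrite 2 [h1]
    simp
  have h3 : (y : E3) = 0 := by
    have := smul_eq_zero.mp h2
    rcases this with h | h
    · norm_num at h
    · exact h
  have := norm_coe_sphere2 y
  rw [h3, norm_zero] at this
  norm_num at this

lemma combo2 {a b : E3} (ha : ‖a‖ = 1) (hb : ‖b‖ = 1) (hab : a ≠ b)
    {s : ℝ} (h0 : 0 ≤ s) (h1 : s ≤ 1) :
    (1 - s) • b - s • a ≠ 0 ∧ ‖(1 - s) • b - s • a‖⁻¹ • ((1 - s) • b - s • a) ≠ a := by
  set c := (1 - s) • b - s • a with hc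
  have hcne : c ≠ 0 := by
    intro h
    have h2 : (1 - s) • b = s • a := sub_eq_zero.mp h
    have h3 : |1 - s| = |s| := by
      have := congrArg norm h2
      rwa [norm_smul, norm_smul, ha, hb, mul_one, mul_one, Real.norm_eq_abs,
        Real.norm_eq_abs] at this
    rw [abs_of_nonneg (by linarith), abs_of_nonneg h0] at h3
    have hs : s = 1/2 := by linarith
    rw [hs, show (1:ℝ) - 1/2 = 1/2 by norm_num] at h2
    exact hab (smul_right_injective E3 (by norm_num : (1/2 : ℝ) ≠ 0) h2.symm)
  refine ⟨hcne, ?_⟩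
  intro hn
  have hcpos : 0 < ‖c‖ := norm_pos_iff.2 hcne
  have h4 : c = ‖c‖ • a := by
    rw [← hn, smul_inv_smul₀ (ne_of_gt hcpos)]
  have h5 : (1 - s) • b = (‖c‖ + s) • a := by
    rw [add_smul, ← h4, hc]
    abel
  have h6 : |1 - s| = |‖c‖ + s| := by
    have := congrArg norm h5
    rwa [norm_smul, norm_smul, ha, hb, mul_one, mul_one, Real.norm_eq_abs,
      Real.norm_eq_abs] at this
  rw [abs_of_nonneg (by linarith), abs_of_nonneg (by linarith)] at h6
  have h7 : (1 - s) • b = (1 - s) • a := by rw [h5, h6]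
  have h8 : (1 - s) ≠ 0 := by intro h; rw [h6] at h; linarith
  exact hab (smul_right_injective E3 h8 h7.symm)

noncomputable def iMap : C(Sphere2, OrderedConfig2Sphere) :=
  ⟨fun y => ⟨(y, negS y), ne_negS y⟩,
    (continuous_id.prodMk negS_continuous).subtype_mk _⟩

noncomputable def rMap : C(OrderedConfig2Sphere, Sphere2) :=
  ⟨fun z => z.1.1, (continuous_fst.comp continuous_subtype_val)⟩

open unitInterval in
noncomputable def configHomotopyEquiv :
    ContinuousMap.HomotopyEquiv OrderedConfig2Sphere Sphere2 where
  toFun := rMap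
  invFun := iMap
  right_inv := by
    rw [show rMap.comp iMap = ContinuousMap.id _ from ContinuousMap.ext fun y => rfl]
  left_inv := by
    apply ContinuousMap.Homotopic.symm
    set c : I × OrderedConfig2Sphere → E3 := fun sz =>
      (1 - (sz.1 : ℝ)) • ((sz.2.1.2 : E3)) - (sz.1 : ℝ) • ((sz.2.1.1 : E3)) with hc
    have hprop : ∀ sz : I × OrderedConfig2Sphere, c sz ≠ 0 ∧
        ‖c sz‖⁻¹ • c sz ≠ (sz.2.1.1 : E3) := by
      intro sz
      exact combo2 (norm_coe_sphere2 _) (norm_coe_sphere2 _)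
        (fun h => sz.2.2 (Subtype.ext h)) sz.1.2.1 sz.1.2.2
    have hcont : Continuous c := by
      apply Continuous.sub
      · exact (continuous_const.sub (continuous_subtype_val.comp continuous_fst)).smul
          (continuous_subtype_val.comp ((continuous_snd.comp
            (continuous_subtype_val.comp continuous_snd)).comp continuous_id))
      · exact (continuous_subtype_val.comp continuous_fst).smul
          (continuous_subtype_val.comp (continuous_fst.comp
            (continuous_subtype_val.comp continuous_snd)))
    refine ⟨{ toFun := fun sz => ⟨(sz.2.1.1,
                ⟨‖c sz‖⁻¹ • c sz, mem_sphere2_normalize (hprop sz).1⟩),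
                fun h => (hprop sz).2 ((congrArg Subtype.val h).symm)⟩
              continuous_toFun := ?_
              map_zero_left := ?_
              map_one_left := ?_ }⟩
    · apply Continuous.subtype_mk
      apply Continuous.prodMk
      · exact continuous_fst.comp (continuous_subtype_val.comp continuous_snd)
      · exact ((hcont.norm.inv₀ fun sz => norm_ne_zero_iff.2 (hprop sz).1).smul
          hcont).subtype_mk _
    · intro z
      apply Subtype.ext
      apply Prod.ext
      · rfl
      · apply Subtype.ext
        show ‖c (0, z)‖⁻¹ • c (0, z) = (z.1.2 : E3)
        have : c (0, z) = (z.1.2 : E3) := by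
          simp [hc]
        rw [this, norm_coe_sphere2, inv_one, one_smul]
    · intro z
      apply Subtype.ext
      apply Prod.ext
      · rfl
      · apply Subtype.ext
        show ‖c (1, z)‖⁻¹ • c (1, z) = (negS z.1.1 : E3)
        have : c (1, z) = -(z.1.1 : E3) := by
          simp [hc]
        rw [this]
        show ‖-(z.1.1 : E3)‖⁻¹ • -(z.1.1 : E3) = -(z.1.1 : E3)
        rw [norm_neg, norm_coe_sphere2, inv_one, one_smul]

instance : SimplyConnectedSpace OrderedConfig2Sphere := by
  rw [simply_connected_def]
  exact ⟨(FundamentalGroupoidFunctor.equivOfHomotopyEquiv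
    (X := TopCat.of OrderedConfig2Sphere) (Y := TopCat.of Sphere2)
    configHomotopyEquiv).trans
    (SimplyConnectedSpace.equiv_unit (X := Sphere2)).some⟩


/-- The pure braid group of two points in `S²` is trivial: the fundamental group of the
ordered configuration space `F₂(S²)` is the trivial group (at any basepoint). -/
theorem pureBraidGroup_two_sphere_trivial (x : OrderedConfig2Sphere) :
    Subsingleton (FundamentalGroup OrderedConfig2Sphere x) := by
  constructor
  intro a b
  apply CategoryTheory.End.ext
  exact Subsingleton.elim (α := Path.Homotopic.Quotient x x) _ _
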